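/- Let n : ℕ → ℕ be strictly increasing with n 0 ≥ 5, and let G = Π i, alternatingGroup (Fin (n i)) be the Cartesian (unrestricted direct) product. Fix k : ℕ. If H is a subgroup of G of finite index at most n k − 1 (i.e. H.index ≠ 0 and H.index ≤ n k − 1), then H contains every element supported in a single coordinate i ≥ k: for all i ≥ k and all x ∈ alternatingGroup (Fin (n i)), the element Pi.mulSingle i x (which is x in coordinate i and the identity elsewhere) belongs to H. -/

import Mathlib

open Equiv Equiv.Perm Subgroup

private def altCongrHom {α β : Type*} [Fintype α] [DecidableEq α] [Fintype β] [DecidableEq β]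
    (e : α ≃ β) : alternatingGroup α →* alternatingGroup β where
  toFun g := ⟨e.permCongr g, by
    rw [Equiv.Perm.mem_alternatingGroup, Equiv.Perm.sign_permCongr]
    exact g.2⟩
  map_one' := Subtype.ext (Equiv.ext fun x => by simp)
  map_mul' g h := Subtype.ext (Equiv.ext fun x => by simp [Equiv.Perm.mul_apply])

private theorem isSimpleGroup_alternating_card_five
    {β : Type*} [Fintype β] [DecidableEq β] (h : Fintype.card β = 5) :
    IsSimpleGroup (alternatingGroup β) := by
  have : Fintype.card (Fin 5) = Fintype.card β := by simp [h]
  obtain ⟨e⟩ := Fintype.card_eq.mp this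
  haveI : Nontrivial (alternatingGroup β) :=
    alternatingGroup.nontrivial_of_three_le_card (by rw [Nat.card_eq_fintype_card]; omega)
  refine IsSimpleGroup.isSimpleGroup_of_surjective (altCongrHom e) ?_
  rintro ⟨u, hu⟩
  refine ⟨_root_.altCongrHom e.symm ⟨u, hu⟩, ?_⟩
  exact Subtype.ext (Equiv.ext fun x => by simp [_root_.altCongrHom])
private theorem exists_small_support
    {m : ℕ} (h5 : 5 ≤ m) (N : Subgroup (alternatingGroup (Fin m)))
    (hN : N.Normal) (hbot : N ≠ ⊥) :
    ∃ t : alternatingGroup (Fin m), t ∈ N ∧ t ≠ 1 ∧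
      ∃ T : Finset (Fin m), T.card ≤ 5 ∧ ∀ x, (t : Perm (Fin m)) x ≠ x → x ∈ T := by
  rw [ne_eq, Subgroup.eq_bot_iff_forall] at hbot
  push_neg at hbot
  obtain ⟨g, hgN, hg1⟩ := hbot
  set σ : Perm (Fin m) := (g : Perm (Fin m)) with hσ
  have hσ1 : σ ≠ 1 := fun h => hg1 (Subtype.ext h)
  obtain ⟨a, ha⟩ : ∃ a, σ a ≠ a := by
    by_contra h
    push_neg at h
    exact hσ1 (Equiv.ext h)
  set b : Fin m := σ a with hb
  have hab : a ≠ b := fun h => ha h.symm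
  have hcompl : (({a, b, σ b} : Finset (Fin m))ᶜ).Nonempty := by
    rw [← Finset.card_pos, Finset.card_compl]
    have h1 := Finset.card_insert_le a ({b, σ b} : Finset (Fin m))
    have h2 := Finset.card_insert_le b ({σ b} : Finset (Fin m))
    have h3 : ({σ b} : Finset (Fin m)).card = 1 := Finset.card_singleton _
    have h4 : Fintype.card (Fin m) = m := Fintype.card_fin m
    omega
  obtain ⟨c, hc⟩ := hcompl
  simp only [Finset.mem_compl, Finset.mem_insert, Finset.mem_singleton] at hc
  push_neg at hc
  obtain ⟨hca, hcb, hcσb⟩ := hc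
  have hbc : b ≠ c := fun h => hcb h.symm
  set δ : Perm (Fin m) := Equiv.swap a b * Equiv.swap b c with hδ
  have hδa : δ a = b := by
    rw [hδ, Equiv.Perm.mul_apply, Equiv.swap_apply_of_ne_of_ne hab (Ne.symm hca),
      Equiv.swap_apply_left]
  have hδb : δ b = c := by
    rw [hδ, Equiv.Perm.mul_apply, Equiv.swap_apply_left,
      Equiv.swap_apply_of_ne_of_ne hca hcb]
  have hδc : δ c = a := by
    rw [hδ, Equiv.Perm.mul_apply, Equiv.swap_apply_right, Equiv.swap_apply_right]
  have hδfix : ∀ x, x ≠ a → x ≠ b → x ≠ c → δ x = x := fun x hxa hxb hxc => by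
    rw [hδ, Equiv.Perm.mul_apply, Equiv.swap_apply_of_ne_of_ne hxb hxc,
      Equiv.swap_apply_of_ne_of_ne hxa hxb]
  have hδsign : δ ∈ alternatingGroup (Fin m) := by
    rw [Equiv.Perm.mem_alternatingGroup, hδ, map_mul, Equiv.Perm.sign_swap hab,
      Equiv.Perm.sign_swap hbc]
    simp
  set D : alternatingGroup (Fin m) := ⟨δ, hδsign⟩ with hD
  set t : alternatingGroup (Fin m) := g * (D * g⁻¹ * D⁻¹) with ht
  have htN : t ∈ N := mul_mem hgN (hN.conj_mem g⁻¹ (inv_mem hgN) D)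
  set τ : Perm (Fin m) := (t : Perm (Fin m)) with hτ
  have hτeq : τ = σ * δ * σ⁻¹ * δ⁻¹ := by
    simp only [hτ, ht, hD, Subgroup.coe_mul, InvMemClass.coe_inv, ← hσ]
    group
  have hδinva : δ⁻¹ a = c := by
    rw [Equiv.Perm.inv_eq_iff_eq]
    exact hδc.symm
  -- τ a ≠ a
  have hτa : τ a ≠ a := by
    have key : τ a = σ (δ (σ⁻¹ c)) := by
      rw [hτeq]
      simp only [Equiv.Perm.mul_apply, hδinva]
    by_cases hcase : σ⁻¹ c = c
    · rw [key, hcase, hδc]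
      exact ha
    · have h1 : σ⁻¹ c ≠ a := by
        intro h
        apply hcb
        rw [hb, ← h]
        simp
      have h2 : σ⁻¹ c ≠ b := by
        intro h
        apply hcσb
        rw [← h]
        simp
      rw [key, hδfix _ h1 h2 hcase]
      simp only [Equiv.Perm.inv_def, Equiv.apply_symm_apply]
      exact hca
  have ht1 : t ≠ 1 := by
    intro h
    apply hτa
    rw [hτ, h]
    simp
  refine ⟨t, htN, ht1, {a, b, c, σ b, σ c}, ?_, ?_⟩
  · have h1 := Finset.card_insert_le a ({b, c, σ b, σ c} : Finset (Fin m))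
    have h2 := Finset.card_insert_le b ({c, σ b, σ c} : Finset (Fin m))
    have h3 := Finset.card_insert_le c ({σ b, σ c} : Finset (Fin m))
    have h4 := Finset.card_insert_le (σ b) ({σ c} : Finset (Fin m))
    have h5' : ({σ c} : Finset (Fin m)).card = 1 := Finset.card_singleton _
    omega
  · intro x hx
    by_contra hxT
    simp only [Finset.mem_insert, Finset.mem_singleton] at hxT
    push_neg at hxT
    obtain ⟨hxa, hxb, hxc, hxσb, hxσc⟩ := hxT
    apply hx
    rw [← hτ, hτeq]
    simp only [Equiv.Perm.mul_apply]
    have hδinvx : δ⁻¹ x = x := by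
      rw [Equiv.Perm.inv_eq_iff_eq]
      exact (hδfix x hxa hxb hxc).symm
    rw [hδinvx]
    have h1 : σ⁻¹ x ≠ a := by
      intro h
      apply hxb
      rw [hb, ← h]
      simp
    have h2 : σ⁻¹ x ≠ b := by
      intro h
      apply hxσb
      rw [← h]
      simp
    have h3 : σ⁻¹ x ≠ c := by
      intro h
      apply hxσc
      rw [← h]
      simp
    rw [hδfix _ h1 h2 h3]
    simp


private theorem alt_normal_eq_top_of_small
    {m : ℕ} (h5 : 5 ≤ m) (N : Subgroup (alternatingGroup (Fin m)))
    (hN : N.Normal) (p : Fin m → Prop) [DecidablePred p]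
    (hp : Fintype.card (Subtype p) = 5)
    (t : alternatingGroup (Fin m)) (htN : t ∈ N) (ht1 : t ≠ 1)
    (hsupp : ∀ x, (t : Perm (Fin m)) x ≠ x → p x) : N = ⊤ := by
  set τ : Perm (Fin m) := (t : Perm (Fin m)) with hτ
  have h₁ : ∀ x, p x ↔ p (τ x) := by
    intro x
    by_cases hx : τ x = x
    · rw [hx]
    · constructor
      · intro _
        apply hsupp
        intro hcon
        exact hx (τ.injective hcon)
      · intro _
        exact hsupp x hx
  set τ' : Perm (Subtype p) := τ.subtypePerm (fun x => (h₁ x).symm) with hτ'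
  have hτ'sign : τ' ∈ alternatingGroup (Subtype p) := by
    rw [mem_alternatingGroup, hτ', sign_subtypePerm τ (fun x => (h₁ x).symm) hsupp]
    exact mem_alternatingGroup.mp t.2
  set ψ : alternatingGroup (Subtype p) →* alternatingGroup (Fin m) :=
    MonoidHom.codRestrict
      ((Equiv.Perm.ofSubtype (p := p)).comp (alternatingGroup (Subtype p)).subtype)
      (alternatingGroup (Fin m))
      (fun u => by
        rw [mem_alternatingGroup, MonoidHom.comp_apply, Subgroup.coe_subtype,
          sign_ofSubtype]
        exact mem_alternatingGroup.mp u.2) with hψ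
  have hψval : ∀ u, (ψ u : Perm (Fin m)) = Equiv.Perm.ofSubtype (u : Perm (Subtype p)) :=
    fun u => rfl
  set N' : Subgroup (alternatingGroup (Subtype p)) := N.comap ψ with hN'
  have hN'normal : N'.Normal := hN.comap ψ
  set t' : alternatingGroup (Subtype p) := ⟨τ', hτ'sign⟩ with ht'
  have hψt : ψ t' = t := by
    apply Subtype.ext
    rw [hψval]
    exact ofSubtype_subtypePerm (fun x => (h₁ x).symm) hsupp
  have ht'N' : t' ∈ N' := by
    rw [hN', Subgroup.mem_comap, hψt]
    exact htN
  have ht'1 : t' ≠ 1 := by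
    intro h
    apply ht1
    rw [← hψt, h, map_one]
  haveI := isSimpleGroup_alternating_card_five hp
  have hN'top : N' = ⊤ := by
    rcases hN'normal.eq_bot_or_eq_top with h | h
    · exfalso
      apply ht'1
      rw [h, Subgroup.mem_bot] at ht'N'
      exact ht'N'
    · exact h
  obtain ⟨u, v, w, huv, huw, hvw⟩ := Fintype.two_lt_card_iff.mp (by rw [hp]; norm_num)
  have hvu : (v : Fin m) ≠ (u : Fin m) := fun h => huv (Subtype.ext h.symm)
  have hvw' : (v : Fin m) ≠ (w : Fin m) := fun h => hvw (Subtype.ext h)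
  have huw' : (u : Fin m) ≠ (w : Fin m) := fun h => huw (Subtype.ext h)
  set d : Perm (Fin m) := Equiv.swap (v : Fin m) (u : Fin m) * Equiv.swap (v : Fin m) (w : Fin m)
    with hd
  have hd3 : IsThreeCycle d := isThreeCycle_swap_mul_swap_same hvu hvw' huw'
  set d' : Perm (Subtype p) := Equiv.swap v u * Equiv.swap v w with hd'
  have hd'sign : d' ∈ alternatingGroup (Subtype p) := by
    rw [mem_alternatingGroup, hd', map_mul, sign_swap (fun h => huv h.symm), sign_swap hvw]
    simp
  set dA : alternatingGroup (Subtype p) := ⟨d', hd'sign⟩ with hdA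
  have hψd : ψ dA = ⟨d, hd3.mem_alternatingGroup⟩ := by
    apply Subtype.ext
    rw [hψval]
    show Equiv.Perm.ofSubtype d' = d
    rw [hd', map_mul, ofSubtype_swap_eq, ofSubtype_swap_eq, hd]
  have hdN : (⟨d, hd3.mem_alternatingGroup⟩ : alternatingGroup (Fin m)) ∈ N := by
    rw [← hψd]
    have hmem : dA ∈ N' := by rw [hN'top]; exact Subgroup.mem_top _
    rwa [hN', Subgroup.mem_comap] at hmem
  have hclosure := hd3.alternating_normalClosure (by rw [Nat.card_fin]; exact h5)
  rw [eq_top_iff, ← hclosure]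
  haveI := hN
  exact normalClosure_le_normal (Set.singleton_subset_iff.mpr hdN)

private theorem alt_normal_eq_top
    {m : ℕ} (h5 : 5 ≤ m) (N : Subgroup (alternatingGroup (Fin m)))
    (hN : N.Normal) (hbot : N ≠ ⊥) : N = ⊤ := by
  obtain ⟨t, htN, ht1, T, hT5, hTsupp⟩ := exists_small_support h5 N hN hbot
  obtain ⟨S, hTS, -, hS5⟩ :=
    Finset.exists_subsuperset_card_eq (T.subset_univ) hT5
      (by rw [Finset.card_univ, Fintype.card_fin]; exact h5)
  have hcard : @Fintype.card (Subtype fun x : Fin m => x ∈ S)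
      (Subtype.fintype fun x : Fin m => x ∈ S) = 5 := by
    rw [Subsingleton.elim (Subtype.fintype fun x : Fin m => x ∈ S) (Finset.Subtype.fintype S)]
    exact (Fintype.card_of_subtype S fun _ => Iff.rfl).trans hS5
  exact alt_normal_eq_top_of_small h5 N hN (fun x => x ∈ S) hcard
    t htN ht1 (fun x hx => hTS (hTsupp x hx))

theorem mulSingle_mem_of_small_index
    (n : ℕ → ℕ) (hn : StrictMono n) (h5 : 5 ≤ n 0) (k : ℕ)
    (H : Subgroup (∀ i : ℕ, alternatingGroup (Fin (n i))))
    (hfin : H.index ≠ 0) (hle : H.index ≤ n k - 1) :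
    ∀ i : ℕ, k ≤ i → ∀ x : alternatingGroup (Fin (n i)),
      Pi.mulSingle i x ∈ H := by
  intro i hik
  have h5i : 5 ≤ n i := le_trans h5 (hn.monotone (Nat.zero_le i))
  have hki : n k ≤ n i := hn.monotone hik
  set A := alternatingGroup (Fin (n i))
  set f : A →* ∀ j : ℕ, alternatingGroup (Fin (n j)) :=
    MonoidHom.mulSingle (fun j : ℕ => alternatingGroup (Fin (n j))) i
  set K : Subgroup A := H.comap f with hK
  -- index bound for K
  have hKindex : K.index ≤ n i - 1 := by
    have h1 : K.index = H.relIndex f.range := Subgroup.index_comap H f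
    have h2 : H.relIndex f.range ≤ H.index := by
      rw [← Subgroup.relIndex_top_right (H := H)] at hfin ⊢
      exact Subgroup.relIndex_le_of_le_right le_top hfin
    calc K.index ≤ H.index := h1 ▸ h2
      _ ≤ n k - 1 := hle
      _ ≤ n i - 1 := Nat.sub_le_sub_right hki 1
  -- K = ⊤
  have hKtop : K = ⊤ := by
    by_cases hbot : K.normalCore = ⊥
    · -- A embeds in Perm (A ⧸ K), giving a cardinality contradiction
      exfalso
      haveI : Nontrivial (Fin (n i)) := Fin.nontrivial_iff_two_le.mpr (by omega)
      have hker : (MulAction.toPermHom A (A ⧸ K)).ker = ⊥ := by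
        rw [← Subgroup.normalCore_eq_ker]; exact hbot
      have hinj : Function.Injective (MulAction.toPermHom A (A ⧸ K)) :=
        (MonoidHom.ker_eq_bot_iff _).mp hker
      have hcardle : Nat.card A ≤ Nat.card (Equiv.Perm (A ⧸ K)) :=
        Nat.card_le_card_of_injective _ hinj
      have hindpos : K.index ≠ 0 := Subgroup.index_ne_zero_of_finite
      have hquot : Nat.card (A ⧸ K) = K.index := rfl
      have hA : 2 * Nat.card A = Nat.factorial (n i) := by
        have h2m := two_mul_card_alternatingGroup (α := Fin (n i))
        simp only [Nat.card_eq_fintype_card]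
        rw [h2m, Fintype.card_perm, Fintype.card_fin]
      have hperm : Nat.card (Equiv.Perm (A ⧸ K)) = Nat.factorial K.index := by
        haveI : Fintype (A ⧸ K) := Fintype.ofFinite _
        haveI : DecidableEq (A ⧸ K) := Classical.decEq _
        simp only [Nat.card_eq_fintype_card]
        rw [Fintype.card_perm, ← Nat.card_eq_fintype_card, hquot]
      have hfac : Nat.factorial K.index ≤ Nat.factorial (n i - 1) :=
        Nat.factorial_le hKindex
      have hbig : Nat.factorial (n i) ≤ 2 * Nat.factorial (n i - 1) := by
        calc Nat.factorial (n i) = 2 * Nat.card A := hA.symm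
          _ ≤ 2 * Nat.card (Equiv.Perm (A ⧸ K)) := by omega
          _ = 2 * Nat.factorial K.index := by rw [hperm]
          _ ≤ 2 * Nat.factorial (n i - 1) := by omega
      have hsplit : Nat.factorial (n i) = n i * Nat.factorial (n i - 1) := by
        obtain ⟨m', hm'⟩ : ∃ m', n i = m' + 1 := ⟨n i - 1, by omega⟩
        rw [hm']
        simp [Nat.factorial_succ]
      rw [hsplit] at hbig
      have hfpos : 0 < Nat.factorial (n i - 1) := Nat.factorial_pos _
      have hni2 : n i ≤ 2 := Nat.le_of_mul_le_mul_right (by omega) hfpos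
      omega
    · have htop : K.normalCore = ⊤ :=
        alt_normal_eq_top h5i K.normalCore K.normalCore_normal hbot
      exact top_le_iff.mp (htop ▸ K.normalCore_le)
  intro x
  have hxK : x ∈ K := hKtop ▸ Subgroup.mem_top x
  exact hxK
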